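/- Let α > 1 be a real root of p(X) = X⁴ − X³ − X² − X + 1. Then for every k ∈ ℕ, the identity α^{3k+1} + 1 = α^{3k} + α + Σ_{i=1}^{k} α^{3i−1} holds. -/

import Mathlib

/-- If `α > 1` is a root of `X⁴ - X³ - X² - X + 1`, then for every `k ≥ 1`,
`α^{3k+1} + 1 = α^{3k} + α + ∑_{i=1}^{k} α^{3i-1}`. -/
theorem stmt_12 (α : ℝ) (hα : 1 < α)
    (hroot : α ^ 4 - α ^ 3 - α ^ 2 - α + 1 = 0) (k : ℕ) (hk : 1 ≤ k) :
    α ^ (3 * k + 1) + 1 = α ^ (3 * k) + α + ∑ i ∈ Finset.Icc 1 k, α ^ (3 * i - 1) := by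
  induction k with
  | zero => omega
  | succ n ih =>
    rcases Nat.eq_or_lt_of_le hk with h | h
    · simp [← h]
      nlinarith [hroot]
    · have hn : 1 ≤ n := by omega
      have ihn := ih hn
      rw [Finset.sum_Icc_succ_top (by omega : 1 ≤ n + 1)]
      have h1 : 3 * (n + 1) + 1 = 3 * n + 4 := by ring
      have h2 : 3 * (n + 1) = 3 * n + 3 := by ring
      have h3 : 3 * n + 3 - 1 = 3 * n + 2 := by omega
      rw [h1, h2, h3]
      have key : α ^ (3 * n + 4) = α ^ (3 * n + 3) + α ^ (3 * n + 2) + α ^ (3 * n + 1) - α ^ (3 * n) := by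
        have hα4 : α ^ 4 = α ^ 3 + α ^ 2 + α - 1 := by linarith
        have e : α ^ (3 * n + 4) = α ^ (3 * n) * α ^ 4 := by ring
        rw [e, hα4]; ring
      linarith [key, ihn]
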